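/- For every compact Hausdorff space X, the space J(X) of all max-min measures on X, endowed with the weak* topology, is compact. -/

import Mathlib

def IsMaxMinMeasure {X : Type*} [TopologicalSpace X] (μ : C(X, ℝ) → ℝ) : Prop :=
  (∀ c : ℝ, μ (ContinuousMap.const X c) = c) ∧
  (∀ φ ψ : C(X, ℝ), μ (φ ⊔ ψ) = max (μ φ) (μ ψ)) ∧
  (∀ (c : ℝ) (φ : C(X, ℝ)), μ (ContinuousMap.const X c ⊓ φ) = min c (μ φ))
/-- the space `J(X)` of max-min measures on a compact Hausdorff space,
with the weak* topology (the subspace topology from the product topology on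
`ℝ^{C(X)}`), is compact. -/
theorem compactSpace_maxMinMeasures
    {X : Type*} [TopologicalSpace X] [CompactSpace X] [T2Space X] :
    CompactSpace {μ : C(X, ℝ) → ℝ // IsMaxMinMeasure μ} := by
  suffices h : IsCompact {μ : C(X, ℝ) → ℝ | IsMaxMinMeasure μ} by
    exact isCompact_iff_compactSpace.mp h
  have hsub : {μ : C(X, ℝ) → ℝ | IsMaxMinMeasure μ} ⊆
      Set.pi Set.univ (fun φ => Set.Icc (-‖φ‖) ‖φ‖) := by
    rintro μ ⟨hc, hsup, hinf⟩ φ _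
    constructor
    · have h1 : φ ⊔ ContinuousMap.const X (-‖φ‖) = φ := by
        rw [sup_eq_left]
        intro x
        show (ContinuousMap.const X (-‖φ‖)) x ≤ φ x
        simp only [ContinuousMap.const_apply]
        linarith [(abs_le.mp (φ.norm_coe_le_norm x)).1]
      have h2 := hsup φ (ContinuousMap.const X (-‖φ‖))
      rw [h1, hc] at h2
      rw [h2]
      exact le_max_right _ _
    · have h1 : ContinuousMap.const X ‖φ‖ ⊓ φ = φ := by
        rw [inf_eq_right]
        intro x
        show φ x ≤ (ContinuousMap.const X ‖φ‖) x
        simp only [ContinuousMap.const_apply]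
        linarith [(abs_le.mp (φ.norm_coe_le_norm x)).2]
      have h2 := hinf ‖φ‖ φ
      rw [h1] at h2
      rw [h2]
      exact min_le_left _ _
  have hclosed : IsClosed {μ : C(X, ℝ) → ℝ | IsMaxMinMeasure μ} := by
    have heq : {μ : C(X, ℝ) → ℝ | IsMaxMinMeasure μ} =
        (⋂ c : ℝ, {μ : C(X, ℝ) → ℝ | μ (ContinuousMap.const X c) = c}) ∩
        ((⋂ φ : C(X, ℝ), ⋂ ψ : C(X, ℝ),
            {μ : C(X, ℝ) → ℝ | μ (φ ⊔ ψ) = max (μ φ) (μ ψ)}) ∩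
         (⋂ c : ℝ, ⋂ φ : C(X, ℝ),
            {μ : C(X, ℝ) → ℝ | μ (ContinuousMap.const X c ⊓ φ) = min c (μ φ)})) := by
      ext μ
      simp [IsMaxMinMeasure, Set.mem_iInter]
    rw [heq]
    refine IsClosed.inter (isClosed_iInter fun c => ?_)
      (IsClosed.inter (isClosed_iInter fun φ => isClosed_iInter fun ψ => ?_)
        (isClosed_iInter fun c => isClosed_iInter fun φ => ?_))
    · exact isClosed_eq (continuous_apply _) continuous_const
    · exact isClosed_eq (continuous_apply _)
        ((continuous_apply φ).max (continuous_apply ψ))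
    · exact isClosed_eq (continuous_apply _)
        (continuous_const.min (continuous_apply φ))
  exact (isCompact_univ_pi fun φ => isCompact_Icc).of_isClosed_subset hclosed hsub
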